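/- (Mittag-Leffler form of the generalized Gronwall inequality) Under the hypotheses of the generalized Gronwall inequality—u, v continuous nonnegative, g continuous nonnegative nondecreasing, r continuous nonnegative on a ≤ τ ≤ t ≤ b, ψ increasing C¹, 0 < α ≤ 1, and u(t) ≤ v(t) + g(t) ∫_a^t ψ'(τ)(ψ(t)−ψ(τ))^{α−1} r(t,τ) u(τ) dτ—if in addition v is nondecreasing and t ↦ r(t,t) is nondecreasing with r(t,τ) ≤ r(t,t) for τ ≤ t, then u(t) ≤ v(t) · E_α(g(t) r(t,t) Γ(α) (ψ(t)−ψ(a))^α) for all t ∈ [a,b]. -/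

import Mathlib

set_option maxHeartbeats 1000000
open MeasureTheory Set Nat

lemma cont_rpow_const {e : ℝ} (he : 0 ≤ e) : Continuous fun x : ℝ => x ^ e :=
  continuous_iff_continuousAt.2 fun x => Real.continuousAt_rpow_const x e (Or.inr he)

lemma summable_ML {α : ℝ} (hα : 0 < α) {z : ℝ} (hz : 0 ≤ z) :
    Summable fun k : ℕ => z ^ k / Real.Gamma (α * k + 1) := by
  set R : ℝ := (2 * z + 1) ^ (1 / α) with hR
  have hR1 : (1:ℝ) ≤ R := Real.one_le_rpow (by linarith) (by positivity)
  have hR0 : (0:ℝ) < R := by linarith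
  have hRα : R ^ α = 2 * z + 1 := by
    rw [hR, ← Real.rpow_mul (by linarith), one_div_mul_cancel hα.ne', Real.rpow_one]
  obtain ⟨C, hC⟩ := ((Real.summable_pow_div_factorial R).tendsto_atTop_zero).bddAbove_range
  have hCb : ∀ n : ℕ, R ^ n ≤ C * n ! := by
    intro n
    have h1 : R ^ n / n ! ≤ C := hC ⟨n, rfl⟩
    have h2 : (0:ℝ) < (n ! : ℝ) := by positivity
    calc R ^ n = R ^ n / n ! * n ! := by field_simp
    _ ≤ C * n ! := by nlinarith [pow_pos hR0 n]
  have hC0 : (0:ℝ) < C := lt_of_lt_of_le one_pos (by simpa using hCb 0)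
  set k0 : ℕ := ⌈1 / α⌉₊ + 1 with hk0
  rw [← summable_nat_add_iff k0]
  apply Summable.of_nonneg_of_le (f := fun k => (C * R) * (1/2) ^ k)
  · intro k
    have : 0 < Real.Gamma (α * (k + k0) + 1) := Real.Gamma_pos_of_pos (by positivity)
    positivity
  · intro k
    set n : ℕ := k + k0 with hn
    have hαn : (1:ℝ) ≤ α * n := by
      have h1 : (1/α : ℝ) ≤ ⌈1/α⌉₊ := Nat.le_ceil _
      have h2 : (⌈1/α⌉₊ : ℝ) + 1 ≤ (n : ℝ) := by
        have h3 : k0 ≤ n := by omega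
        have h4 : (k0:ℝ) ≤ (n:ℝ) := by exact_mod_cast h3
        rw [hk0] at h4
        push_cast at h4 ⊢
        linarith
      calc (1:ℝ) = α * (1/α) := by field_simp
      _ ≤ α * ((⌈1/α⌉₊ : ℝ) + 1) := by nlinarith
      _ ≤ α * n := by nlinarith
    set m : ℕ := ⌊α * n⌋₊ with hm
    have hm1 : 1 ≤ m := Nat.one_le_iff_ne_zero.2 (by
      simp only [hm, ne_eq, Nat.floor_eq_zero, not_lt]
      exact hαn)
    have hmgt : α * n - 1 < (m:ℝ) := Nat.sub_one_lt_floor _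
    have hmle : (m : ℝ) ≤ α * n := Nat.floor_le (by positivity)
    have hGam : (m ! : ℝ) ≤ Real.Gamma (α * n + 1) := by
      have h2m : (2:ℝ) ≤ (m:ℝ) + 1 := by exact_mod_cast Nat.succ_le_succ hm1
      have hmono := Real.Gamma_strictMonoOn_Ici.monotoneOn (a := ((m:ℝ) + 1)) (b := α * n + 1)
        (by simpa using h2m) (by simp only [mem_Ici]; linarith) (by linarith)
      calc ((m ! : ℝ)) = Real.Gamma ((m:ℝ) + 1) := (Real.Gamma_nat_eq_factorial m).symm
      _ ≤ Real.Gamma (α * n + 1) := hmono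
    have hGpos : (0:ℝ) < Real.Gamma (α * n + 1) := Real.Gamma_pos_of_pos (by positivity)
    have hfac : (0:ℝ) < (m ! : ℝ) := by positivity
    have hzn : (0:ℝ) ≤ z ^ n := pow_nonneg hz n
    have hRp : (0:ℝ) < R ^ (α * (n:ℝ) - 1) := Real.rpow_pos_of_pos hR0 _
    have h5 : R ^ (α * (n:ℝ) - 1) ≤ (m ! : ℝ) * C := by
      have h5a : R ^ (α * (n:ℝ) - 1) ≤ (R:ℝ) ^ (m:ℕ) := by
        rw [← Real.rpow_natCast R m]
        exact Real.rpow_le_rpow_of_exponent_le hR1 (by linarith)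
      nlinarith [hCb m]
    have hRn : R ^ (α * (n:ℝ)) = (2*z+1) ^ n := by
      rw [Real.rpow_mul hR0.le, hRα, Real.rpow_natCast]
    have h7 : R ^ (α * (n:ℝ) - 1) = (2*z+1) ^ n / R := by
      rw [Real.rpow_sub hR0, Real.rpow_one, hRn]
    have hzb : z ^ n ≤ (2*z+1) ^ n * (1/2 : ℝ) ^ n := by
      calc z ^ n ≤ ((2*z+1) * (1/2)) ^ n := pow_le_pow_left₀ hz (by linarith) n
      _ = (2*z+1) ^ n * (1/2 : ℝ) ^ n := mul_pow _ _ _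
    have h2zp : (0:ℝ) < (2*z+1) ^ n := by positivity
    calc z ^ n / Real.Gamma (α * n + 1) ≤ z ^ n / (m ! : ℝ) := by gcongr
    _ ≤ C * (z ^ n / R ^ (α * (n:ℝ) - 1)) := by
        have heq : C * (z ^ n / R ^ (α * (n:ℝ) - 1)) = z ^ n * C / R ^ (α * (n:ℝ) - 1) := by
          ring
        rw [heq, div_le_div_iff₀ hfac hRp]
        nlinarith
    _ = C * (z ^ n * R / (2*z+1) ^ n) := by rw [h7, div_div_eq_mul_div]
    _ ≤ C * (R * (1/2) ^ n) := by
        have : z ^ n * R / (2*z+1) ^ n ≤ R * (1/2) ^ n := by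
          rw [div_le_iff₀ h2zp]
          nlinarith [pow_pos (show (0:ℝ) < 1/2 by norm_num) n]
        nlinarith
    _ ≤ (C * R) * (1/2) ^ k := by
        have h8 : ((1:ℝ)/2) ^ n ≤ (1/2) ^ k :=
          pow_le_pow_of_le_one (by norm_num) (by norm_num) (by omega)
        nlinarith [mul_le_mul_of_nonneg_left h8 (mul_nonneg hC0.le hR0.le)]
  · exact summable_geometric_two.mul_left _

-- real beta integral on [0,1]
lemma beta01 {α β : ℝ} (hα : 0 < α) (hβ : 0 ≤ β) :
    ∫ x in (0:ℝ)..1, (1 - x) ^ (α - 1) * x ^ β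
      = Real.Gamma α * Real.Gamma (β + 1) / Real.Gamma (α + β + 1) := by
  have hβ1 : (0:ℝ) < β + 1 := by linarith
  have hC := Complex.Gamma_mul_Gamma_eq_betaIntegral (s := (β+1 : ℂ)) (t := (α : ℂ))
    (by simp [hβ1]) (by simpa using hα)
  have hreal : Complex.betaIntegral (β+1) α
      = ((∫ x in (0:ℝ)..1, (1 - x) ^ (α - 1) * x ^ β : ℝ) : ℂ) := by
    rw [Complex.betaIntegral]
    rw [← intervalIntegral.integral_ofReal]
    apply intervalIntegral.integral_congr
    intro x hx
    rw [uIcc_of_le (by norm_num)] at hx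
    obtain ⟨hx0, hx1⟩ := hx
    have h1 : ((x:ℂ)) ^ ((β+1:ℂ) - 1) = ((x ^ β : ℝ) : ℂ) := by
      rw [show ((β+1:ℂ) - 1) = (β:ℂ) by ring, ← Complex.ofReal_cpow hx0]
    have h2 : ((1:ℂ) - (x:ℂ)) ^ ((α:ℂ) - 1) = (((1-x) ^ (α-1) : ℝ) : ℂ) := by
      rw [show ((1:ℂ) - (x:ℂ)) = (((1-x : ℝ)):ℂ) by push_cast; ring,
        show ((α:ℂ) - 1) = (((α - 1 : ℝ)):ℂ) by push_cast; ring,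
        ← Complex.ofReal_cpow (by linarith)]
    simp only [h1, h2]
    push_cast
    ring
  have e1 : ((β:ℂ) + 1) = ((β+1 : ℝ) : ℂ) := by push_cast; ring
  have e2 : ((β:ℂ) + 1 + (α:ℂ)) = ((β+1+α : ℝ) : ℂ) := by push_cast; ring
  rw [hreal, e1] at hC
  rw [show ((β+1:ℝ):ℂ) + (α:ℂ) = ((β+1+α : ℝ) : ℂ) by push_cast; ring,
    Complex.Gamma_ofReal, Complex.Gamma_ofReal, Complex.Gamma_ofReal,
    ← Complex.ofReal_mul, ← Complex.ofReal_mul] at hC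
  have hC3 := Complex.ofReal_injective hC
  have hGpos : 0 < Real.Gamma (β + 1 + α) := Real.Gamma_pos_of_pos (by linarith)
  rw [show α + β + 1 = β + 1 + α by ring]
  rw [eq_div_iff hGpos.ne']
  linarith [hC3]

lemma betaIoo {α β c d : ℝ} (hα : 0 < α) (hβ : 0 ≤ β) (hcd : c ≤ d) :
    ∫ x in Ioo c d, (d - x) ^ (α - 1) * (x - c) ^ β
      = Real.Gamma α * Real.Gamma (β + 1) / Real.Gamma (α + β + 1) * (d - c) ^ (α + β) := by
  rcases eq_or_lt_of_le hcd with h | h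
  · simp [← h, Real.zero_rpow (by positivity : α + β ≠ 0)]
  · set L : ℝ := d - c with hL
    have hL0 : 0 < L := by simp [hL]; linarith
    have key := intervalIntegral.smul_integral_comp_mul_add
      (a := (0:ℝ)) (b := 1) (fun x => (d - x) ^ (α - 1) * (x - c) ^ β) L c
    rw [mul_zero, zero_add, mul_one] at key
    have hLc : L + c = d := by simp [hL]
    rw [hLc] at key
    have congr1 : ∫ y in (0:ℝ)..1, (d - (L * y + c)) ^ (α - 1) * ((L * y + c) - c) ^ β
        = ∫ y in (0:ℝ)..1, (L ^ (α-1) * L ^ β) * ((1 - y) ^ (α - 1) * y ^ β) := by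
      apply intervalIntegral.integral_congr
      intro y hy
      rw [uIcc_of_le (by norm_num)] at hy
      obtain ⟨hy0, hy1⟩ := hy
      have e1 : d - (L * y + c) = L * (1 - y) := by simp [hL]; ring
      have e2 : (L * y + c) - c = L * y := by ring
      simp only [e1, e2, Real.mul_rpow hL0.le (by linarith : (0:ℝ) ≤ 1 - y),
        Real.mul_rpow hL0.le hy0]
      ring
    rw [congr1, intervalIntegral.integral_const_mul, beta01 hα hβ] at key
    have hIoo : ∫ x in Ioo c d, (d - x) ^ (α - 1) * (x - c) ^ β
        = ∫ x in c..d, (d - x) ^ (α - 1) * (x - c) ^ β := by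
      rw [intervalIntegral.integral_of_le hcd, integral_Ioc_eq_integral_Ioo]
    rw [hIoo, ← key, smul_eq_mul]
    have : L * (L ^ (α-1) * L ^ β) = L ^ (α + β) := by
      have h1 : L ^ (α-1) * L ^ β = L ^ (α - 1 + β) := (Real.rpow_add hL0 _ _).symm
      have h2 : L ^ (α + β) = L ^ (1:ℝ) * L ^ (α - 1 + β) := by
        rw [← Real.rpow_add hL0]; congr 1; ring
      rw [h1, h2, Real.rpow_one]
    rw [← mul_assoc, this]
    ring

section
variable {a b s α β : ℝ} {ψ : ℝ → ℝ}

lemma psi_hasDeriv (hC1 : ContDiffOn ℝ 1 ψ (Icc a b)) (hsb : s ≤ b) :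
    ∀ x ∈ Ioo a s, HasDerivWithinAt ψ (deriv ψ x) (Ioo a s) x := by
  intro x hx
  have hxb : x ∈ Ioo a b := ⟨hx.1, lt_of_lt_of_le hx.2 hsb⟩
  have h : DifferentiableAt ℝ ψ x :=
    (hC1.contDiffAt (Icc_mem_nhds hxb.1 hxb.2)).differentiableAt one_ne_zero
  exact h.hasDerivAt.hasDerivWithinAt

lemma psi_image (hmono : StrictMonoOn ψ (Icc a b)) (hcont : ContinuousOn ψ (Icc a b))
    (has : a ≤ s) (hsb : s ≤ b) : ψ '' Ioo a s = Ioo (ψ a) (ψ s) := by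
  apply Subset.antisymm
  · rintro _ ⟨x, hx, rfl⟩
    have hx1 : x ∈ Icc a b := ⟨hx.1.le, le_trans hx.2.le hsb⟩
    have haI : a ∈ Icc a b := ⟨le_rfl, le_trans has hsb⟩
    have hsI : s ∈ Icc a b := ⟨has, hsb⟩
    exact ⟨hmono haI hx1 hx.1, hmono hx1 hsI hx.2⟩
  · exact intermediate_value_Ioo has (hcont.mono (Icc_subset_Icc le_rfl hsb))

lemma kernel_integrable (hα : 0 < α) (hmono : StrictMonoOn ψ (Icc a b))
    (hC1 : ContDiffOn ℝ 1 ψ (Icc a b)) (hψ' : ∀ t ∈ Icc a b, 0 < deriv ψ t)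
    (has : a ≤ s) (hsb : s ≤ b) :
    IntegrableOn (fun τ => deriv ψ τ * (ψ s - ψ τ) ^ (α - 1)) (Ioo a s) := by
  have hsub : Ioo a s ⊆ Icc a b := fun x hx => ⟨hx.1.le, le_trans hx.2.le hsb⟩
  have hinj : InjOn ψ (Ioo a s) := (hmono.injOn).mono hsub
  have hiff := integrableOn_image_iff_integrableOn_abs_deriv_smul measurableSet_Ioo
    (psi_hasDeriv hC1 hsb) hinj (fun x => (ψ s - x) ^ (α - 1))
  rw [psi_image hmono hC1.continuousOn has hsb] at hiff
  have hbase : IntegrableOn (fun x => (ψ s - x) ^ (α - 1)) (Ioo (ψ a) (ψ s)) := by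
    have h1 : IntervalIntegrable (fun x : ℝ => x ^ (α - 1)) volume 0 (ψ s - ψ a) :=
      intervalIntegral.intervalIntegrable_rpow' (by linarith)
    have h2 := h1.comp_sub_left (ψ s)
    rw [sub_zero] at h2
    have h3 : IntervalIntegrable (fun x => (ψ s - x) ^ (α - 1)) volume (ψ a) (ψ s) := by
      have : ψ s - (ψ s - ψ a) = ψ a := by ring
      rw [this] at h2
      exact h2.symm
    have hle : ψ a ≤ ψ s := by
      rcases eq_or_lt_of_le has with h | h
      · simp [← h]
      · exact (hmono ⟨le_rfl, le_trans has hsb⟩ ⟨has, hsb⟩ h).le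
    exact ((intervalIntegrable_iff_integrableOn_Ioo_of_le hle).mp h3)
  have := hiff.mp hbase
  apply this.congr_fun ?_ measurableSet_Ioo
  intro x hx
  have hx' : x ∈ Icc a b := ⟨hx.1.le, le_trans hx.2.le hsb⟩
  simp only [smul_eq_mul, abs_of_pos (hψ' x hx')]

lemma kernel_eval (hα : 0 < α) (hβ : 0 ≤ β) (hmono : StrictMonoOn ψ (Icc a b))
    (hC1 : ContDiffOn ℝ 1 ψ (Icc a b)) (hψ' : ∀ t ∈ Icc a b, 0 < deriv ψ t)
    (has : a ≤ s) (hsb : s ≤ b) :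
    ∫ τ in Ioo a s, deriv ψ τ * ((ψ s - ψ τ) ^ (α - 1) * (ψ τ - ψ a) ^ β)
      = Real.Gamma α * Real.Gamma (β + 1) / Real.Gamma (α + β + 1)
        * (ψ s - ψ a) ^ (α + β) := by
  have hsub : Ioo a s ⊆ Icc a b := fun x hx => ⟨hx.1.le, le_trans hx.2.le hsb⟩
  have hinj : InjOn ψ (Ioo a s) := (hmono.injOn).mono hsub
  have key := integral_image_eq_integral_abs_deriv_smul measurableSet_Ioo
    (psi_hasDeriv hC1 hsb) hinj (fun x => (ψ s - x) ^ (α - 1) * (x - ψ a) ^ β)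
  rw [psi_image hmono hC1.continuousOn has hsb] at key
  have hle : ψ a ≤ ψ s := by
    rcases eq_or_lt_of_le has with h | h
    · simp [← h]
    · exact (hmono ⟨le_rfl, le_trans has hsb⟩ ⟨has, hsb⟩ h).le
  rw [betaIoo hα hβ hle] at key
  rw [key]
  apply setIntegral_congr_fun measurableSet_Ioo
  intro τ hτ
  have hτ' : τ ∈ Icc a b := ⟨hτ.1.le, le_trans hτ.2.le hsb⟩
  simp only [smul_eq_mul, abs_of_pos (hψ' τ hτ')]

end

/-- One-parameter Mittag-Leffler function `E_α(z) = ∑ z^k / Γ(αk+1)`. -/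
noncomputable def ML (α z : ℝ) : ℝ := ∑' k : ℕ, z ^ k / Real.Gamma (α * k + 1)

theorem generalized_gronwall_mittagLeffler
    (a b α : ℝ) (ψ : ℝ → ℝ) (u v g : ℝ → ℝ) (r : ℝ → ℝ → ℝ)
    (hα0 : 0 < α) (hα1 : α ≤ 1) (hab : a ≤ b)
    (hmono : StrictMonoOn ψ (Icc a b))
    (hC1 : ContDiffOn ℝ 1 ψ (Icc a b))
    (hψ'pos : ∀ t ∈ Icc a b, 0 < deriv ψ t)
    (hu : ContinuousOn u (Icc a b)) (hu0 : ∀ t ∈ Icc a b, 0 ≤ u t)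
    (hv : ContinuousOn v (Icc a b)) (hv0 : ∀ t ∈ Icc a b, 0 ≤ v t)
    (hvmono : MonotoneOn v (Icc a b))
    (hg : ContinuousOn g (Icc a b)) (hg0 : ∀ t ∈ Icc a b, 0 ≤ g t)
    (hgmono : MonotoneOn g (Icc a b))
    (hr : ContinuousOn (fun p : ℝ × ℝ => r p.1 p.2)
      {p : ℝ × ℝ | a ≤ p.2 ∧ p.2 ≤ p.1 ∧ p.1 ≤ b})
    (hr0 : ∀ t τ, a ≤ τ → τ ≤ t → t ≤ b → 0 ≤ r t τ)
    (hrdiagmono : MonotoneOn (fun t => r t t) (Icc a b))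
    (hrdiag : ∀ t τ, a ≤ τ → τ ≤ t → t ≤ b → r t τ ≤ r t t)
    (hineq : ∀ t ∈ Icc a b,
      u t ≤ v t + g t * ∫ τ in a..t, deriv ψ τ * (ψ t - ψ τ) ^ (α - 1) * r t τ * u τ) :
    ∀ t ∈ Icc a b,
      u t ≤ v t * ML α (g t * r t t * Real.Gamma α * (ψ t - ψ a) ^ α) := by
  intro t ht
  obtain ⟨hat, htb⟩ := ht
  have hψcont : ContinuousOn ψ (Icc a b) := hC1.continuousOn
  have hψmono : MonotoneOn ψ (Icc a b) := hmono.monotoneOn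
  have htI : t ∈ Icc a b := ⟨hat, htb⟩
  have haI : a ∈ Icc a b := ⟨le_rfl, hab⟩
  have hX0 : (0:ℝ) ≤ ψ t - ψ a := by linarith [hψmono haI htI hat]
  have hrtt0 : 0 ≤ r t t := hr0 t t hat le_rfl htb
  have hgt0 : 0 ≤ g t := hg0 t htI
  have hΓα : 0 < Real.Gamma α := Real.Gamma_pos_of_pos hα0
  set K : ℝ := g t * r t t with hKdef
  have hK0 : 0 ≤ K := mul_nonneg hgt0 hrtt0
  set z : ℝ := K * Real.Gamma α * (ψ t - ψ a) ^ α with hzdef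
  have hz0 : 0 ≤ z := by
    apply mul_nonneg (mul_nonneg hK0 hΓα.le) (Real.rpow_nonneg hX0 _)
  -- maximum of u on [a,t]
  obtain ⟨x0, hx0mem, hx0max⟩ := isCompact_Icc.exists_isMaxOn (nonempty_Icc.mpr hat)
      (hu.mono (Icc_subset_Icc le_rfl htb))
  set M : ℝ := u x0 with hMdef
  have hM : ∀ s ∈ Icc a t, u s ≤ M := fun s hs => hx0max hs
  have hM0 : 0 ≤ M := hu0 x0 ((Icc_subset_Icc le_rfl htb) hx0mem)
  set c : ℕ → ℝ := fun k => (K * Real.Gamma α) ^ k / Real.Gamma (α * k + 1) with hcdef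
  set W : ℕ → ℝ → ℝ := fun k τ => (ψ τ - ψ a) ^ (α * k) with hWdef
  have hGk : ∀ k : ℕ, 0 < Real.Gamma (α * k + 1) := fun k =>
    Real.Gamma_pos_of_pos (by positivity)
  have hWcont : ∀ k : ℕ, ContinuousOn (W k) (Icc a b) := fun k =>
    (cont_rpow_const (by positivity)).comp_continuousOn (hψcont.sub continuousOn_const)
  -- the key induction
  have P : ∀ n : ℕ, ∀ s ∈ Icc a t,
      u s ≤ v t * (∑ k ∈ Finset.range n, c k * W k s) + M * (c n * W n s) := by
    intro n
    induction n with
    | zero =>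
      intro s hs
      have h1 : c 0 * W 0 s = 1 := by
        simp [hcdef, hWdef, Real.Gamma_one]
      simp only [Finset.range_zero, Finset.sum_empty, mul_zero, zero_add, h1, mul_one]
      exact hM s hs
    | succ n ih =>
      intro s hs
      obtain ⟨hsa, hst⟩ := hs
      have hsb : s ≤ b := le_trans hst htb
      have hsI : s ∈ Icc a b := ⟨hsa, hsb⟩
      set Kf : ℝ → ℝ := fun τ => deriv ψ τ * (ψ s - ψ τ) ^ (α - 1) with hKfdef
      have hKf_int : IntegrableOn Kf (Ioo a s) :=
        kernel_integrable hα0 hmono hC1 hψ'pos hsa hsb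
      have hsub : Ioo a s ⊆ Icc a b := fun x hx => ⟨hx.1.le, le_trans hx.2.le hsb⟩
      have hsubt : Ioo a s ⊆ Icc a t := fun x hx => ⟨hx.1.le, le_trans hx.2.le hst⟩
      have hKf0 : ∀ τ ∈ Ioo a s, 0 ≤ Kf τ := by
        intro τ hτ
        have h1 : ψ τ ≤ ψ s := hψmono (hsub hτ) hsI hτ.2.le
        exact mul_nonneg (hψ'pos τ (hsub hτ)).le (Real.rpow_nonneg (by linarith) _)
      have prod_int : ∀ h : ℝ → ℝ, ContinuousOn h (Icc a b) →
          IntegrableOn (fun τ => Kf τ * h τ) (Ioo a s) := by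
        intro h hcont
        obtain ⟨C, hC⟩ := isCompact_Icc.exists_bound_of_continuousOn hcont
        have hmeas : AEStronglyMeasurable h (volume.restrict (Ioo a s)) :=
          (hcont.mono hsub).aestronglyMeasurable measurableSet_Ioo
        have hbd : ∀ᵐ x ∂(volume.restrict (Ioo a s)), ‖h x‖ ≤ C :=
          (ae_restrict_iff' measurableSet_Ioo).2
            (Filter.Eventually.of_forall fun x hx => hC x (hsub hx))
        exact (Integrable.bdd_mul hKf_int hmeas hbd).congr
          (Filter.Eventually.of_forall fun x => mul_comm (h x) (Kf x))
      have hint_k : ∀ k : ℕ, IntegrableOn (fun τ => Kf τ * W k τ) (Ioo a s) :=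
        fun k => prod_int (W k) (hWcont k)
      set Ival : ℕ → ℝ := fun k => Real.Gamma α * Real.Gamma (α * k + 1)
        / Real.Gamma (α + α * k + 1) * (ψ s - ψ a) ^ (α + α * k) with hIvaldef
      have hIk : ∀ k : ℕ, (∫ τ in Ioo a s, Kf τ * W k τ) = Ival k := by
        intro k
        have h := kernel_eval (α := α) (β := α * k) hα0 (by positivity) hmono hC1
          hψ'pos hsa hsb
        simpa [hKfdef, hWdef, hIvaldef, mul_assoc] using h
      -- the inequality from the hypothesis
      have hineqs := hineq s ⟨hsa, hsb⟩
      have hIF : (∫ τ in a..s, deriv ψ τ * (ψ s - ψ τ) ^ (α - 1) * r s τ * u τ)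
          = ∫ τ in Ioo a s, deriv ψ τ * (ψ s - ψ τ) ^ (α - 1) * r s τ * u τ := by
        rw [intervalIntegral.integral_of_le hsa, integral_Ioc_eq_integral_Ioo]
      rw [hIF] at hineqs
      set RHSf : ℝ → ℝ := fun τ => r t t * (v t * ∑ k ∈ Finset.range n,
        c k * (Kf τ * W k τ) + M * (c n * (Kf τ * W n τ))) with hRHSfdef
      have hRHS_int : IntegrableOn RHSf (Ioo a s) := by
        apply Integrable.const_mul
        apply Integrable.add
        · exact (integrable_finset_sum _ fun k _ => (hint_k k).const_mul (c k)).const_mul (v t)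
        · exact (((hint_k n).const_mul (c n)).const_mul M)
      have hF0ae : 0 ≤ᵐ[volume.restrict (Ioo a s)]
          fun τ => deriv ψ τ * (ψ s - ψ τ) ^ (α - 1) * r s τ * u τ := by
        apply (ae_restrict_iff' measurableSet_Ioo).2
        apply Filter.Eventually.of_forall
        intro τ hτ
        have h1 := hKf0 τ hτ
        have h2 := hr0 s τ hτ.1.le hτ.2.le hsb
        have h3 := hu0 τ (hsub hτ)
        exact mul_nonneg (mul_nonneg h1 h2) h3
      have hrss : r s s ≤ r t t := hrdiagmono hsI htI hst
      have hFle : (∫ τ in Ioo a s, deriv ψ τ * (ψ s - ψ τ) ^ (α - 1) * r s τ * u τ)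
          ≤ ∫ τ in Ioo a s, RHSf τ := by
        apply integral_mono_of_nonneg hF0ae hRHS_int
        apply (ae_restrict_iff' measurableSet_Ioo).2
        apply Filter.Eventually.of_forall
        intro τ hτ
        have hKfτ := hKf0 τ hτ
        have hrsτ : r s τ ≤ r t t := le_trans (hrdiag s τ hτ.1.le hτ.2.le hsb) hrss
        have hrsτ0 : 0 ≤ r s τ := hr0 s τ hτ.1.le hτ.2.le hsb
        have huτ0 : 0 ≤ u τ := hu0 τ (hsub hτ)
        have hBτ := ih τ (hsubt hτ)
        set B : ℝ := v t * (∑ k ∈ Finset.range n, c k * W k τ) + M * (c n * W n τ) with hB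
        have hS : ∑ k ∈ Finset.range n, c k * (Kf τ * W k τ)
            = Kf τ * ∑ k ∈ Finset.range n, c k * W k τ := by
          rw [Finset.mul_sum]
          exact Finset.sum_congr rfl fun k _ => by ring
        have hre : RHSf τ = Kf τ * r t t * B := by
          simp only [hRHSfdef, hB]
          rw [hS]
          ring
        have e1 : Kf τ * r s τ * u τ ≤ Kf τ * r t t * u τ :=
          mul_le_mul_of_nonneg_right (mul_le_mul_of_nonneg_left hrsτ hKfτ) huτ0
        have e2 : Kf τ * r t t * u τ ≤ Kf τ * r t t * B :=
          mul_le_mul_of_nonneg_left hBτ (mul_nonneg hKfτ hrtt0)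
        show deriv ψ τ * (ψ s - ψ τ) ^ (α - 1) * r s τ * u τ ≤ RHSf τ
        have heq : deriv ψ τ * (ψ s - ψ τ) ^ (α - 1) * r s τ * u τ = Kf τ * r s τ * u τ := rfl
        rw [heq, hre]
        linarith
      have hFev : (∫ τ in Ioo a s, RHSf τ)
          = r t t * (v t * (∑ k ∈ Finset.range n, c k * Ival k) + M * (c n * Ival n)) := by
        simp only [hRHSfdef]
        rw [integral_const_mul]
        congr 1
        rw [integral_add ((integrable_finset_sum _ fun k _ =>
            (hint_k k).const_mul (c k)).const_mul (v t))
          (((hint_k n).const_mul (c n)).const_mul M),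
          integral_const_mul, integral_const_mul, integral_const_mul,
          integral_finset_sum _ (fun k _ => (hint_k k).const_mul (c k)), hIk n]
        congr 1
        congr 1
        exact Finset.sum_congr rfl fun k _ => by rw [integral_const_mul, hIk k]
      have hF0 : 0 ≤ ∫ τ in Ioo a s, deriv ψ τ * (ψ s - ψ τ) ^ (α - 1) * r s τ * u τ :=
        integral_nonneg_of_ae hF0ae
      -- combine
      have hgs0 : 0 ≤ g s := hg0 s hsI
      have hgst : g s ≤ g t := hgmono hsI htI hst
      have hvst : v s ≤ v t := hvmono hsI htI hst
      set Q : ℝ := r t t * (v t * (∑ k ∈ Finset.range n, c k * Ival k) + M * (c n * Ival n))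
        with hQdef
      have hQle : (∫ τ in Ioo a s, deriv ψ τ * (ψ s - ψ τ) ^ (α - 1) * r s τ * u τ) ≤ Q := by
        rw [← hFev]; exact hFle
      have hQ0 : 0 ≤ Q := le_trans hF0 hQle
      have hineq2 : u s ≤ v t + g t * Q := by
        nlinarith [mul_le_mul_of_nonneg_left hQle hgs0, mul_le_mul_of_nonneg_right hgst hQ0]
      -- algebraic identification
      have hstep : ∀ k : ℕ, K * (c k * Ival k) = c (k + 1) * W (k + 1) s := by
        intro k
        have hcast : α * ((k : ℝ) + 1) = α + α * k := by ring
        have hcast2 : (((k + 1 : ℕ)) : ℝ) = (k : ℝ) + 1 := by push_cast; ring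
        simp only [hcdef, hWdef, hIvaldef, pow_succ, hcast2, hcast]
        have g1 := (hGk k).ne'
        have g2 : Real.Gamma (α + α * k + 1) ≠ 0 := by
          have : (0:ℝ) < Real.Gamma (α + α * k + 1) := Real.Gamma_pos_of_pos (by positivity)
          exact this.ne'
        field_simp
      have hsum : K * (v t * (∑ k ∈ Finset.range n, c k * Ival k) + M * (c n * Ival n))
          = v t * (∑ k ∈ Finset.range n, c (k + 1) * W (k + 1) s)
            + M * (c (n + 1) * W (n + 1) s) := by
        have h1 : ∑ k ∈ Finset.range n, K * (c k * Ival k)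
            = K * ∑ k ∈ Finset.range n, c k * Ival k := by
          rw [Finset.mul_sum]
        have h2 : ∑ k ∈ Finset.range n, K * (c k * Ival k)
            = ∑ k ∈ Finset.range n, c (k + 1) * W (k + 1) s :=
          Finset.sum_congr rfl fun k _ => hstep k
        calc K * (v t * (∑ k ∈ Finset.range n, c k * Ival k) + M * (c n * Ival n))
            = v t * (∑ k ∈ Finset.range n, K * (c k * Ival k))
              + M * (K * (c n * Ival n)) := by rw [h1]; ring
        _ = v t * (∑ k ∈ Finset.range n, c (k + 1) * W (k + 1) s)
              + M * (c (n + 1) * W (n + 1) s) := by rw [h2, hstep n]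
      have hc0W : c 0 * W 0 s = 1 := by
        simp [hcdef, hWdef, Real.Gamma_one]
      have hsucc : ∑ k ∈ Finset.range (n + 1), c k * W k s
          = (∑ k ∈ Finset.range n, c (k + 1) * W (k + 1) s) + 1 := by
        rw [Finset.sum_range_succ' (fun k => c k * W k s) n, hc0W]
      have hKQ : g t * Q = K * (v t * (∑ k ∈ Finset.range n, c k * Ival k)
          + M * (c n * Ival n)) := by
        rw [hQdef, hKdef]; ring
      rw [hKQ, hsum] at hineq2
      rw [hsucc]
      linarith
  -- conclusion from the induction
  have hq : ∀ k : ℕ, c k * W k t = z ^ k / Real.Gamma (α * k + 1) := by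
    intro k
    have h1 : z ^ k = (K * Real.Gamma α) ^ k * ((ψ t - ψ a) ^ α) ^ k := by
      rw [hzdef, mul_pow]
    have h2 : ((ψ t - ψ a) ^ α) ^ k = (ψ t - ψ a) ^ (α * k) := by
      rw [← Real.rpow_natCast ((ψ t - ψ a) ^ α) k, ← Real.rpow_mul hX0]
    simp only [hcdef, hWdef, h1, h2]
    ring
  have hsum_le : ∀ n : ℕ, (∑ k ∈ Finset.range n, c k * W k t) ≤ ML α z := by
    intro n
    have h1 : (∑ k ∈ Finset.range n, c k * W k t)
        = ∑ k ∈ Finset.range n, z ^ k / Real.Gamma (α * k + 1) :=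
      Finset.sum_congr rfl fun k _ => hq k
    rw [h1, ML]
    exact Summable.sum_le_tsum (Finset.range n)
      (fun k _ => div_nonneg (pow_nonneg hz0 k) (hGk k).le) (summable_ML hα0 hz0)
  have hfinal : ∀ n : ℕ, u t ≤ v t * ML α z + M * (z ^ n / Real.Gamma (α * n + 1)) := by
    intro n
    have h1 := P n t ⟨hat, le_rfl⟩
    rw [hq n] at h1
    have h2 : v t * (∑ k ∈ Finset.range n, c k * W k t) ≤ v t * ML α z :=
      mul_le_mul_of_nonneg_left (hsum_le n) (hv0 t htI)
    linarith
  have htend : Filter.Tendsto (fun n : ℕ => v t * ML α z + M * (z ^ n / Real.Gamma (α * n + 1)))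
      Filter.atTop (nhds (v t * ML α z + M * 0)) :=
    Filter.Tendsto.add tendsto_const_nhds
      (((summable_ML hα0 hz0).tendsto_atTop_zero).const_mul M)
  have := ge_of_tendsto htend (Filter.Eventually.of_forall hfinal)
  simpa using this
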